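/- Theorem (inverse of the second-derivative SBP-SAT matrix): Let Ã = A − [e_L, −d_L]·M_L·[e_Lᵀ; −d_Lᵀ] − [e_R, d_R]·M_R·[e_Rᵀ; d_Rᵀ] with M_L = [[σ_Lα_L, 1+σ_Lβ_L],[τ_Lα_L, τ_Lβ_L]] and M_R = [[σ_Rα_R, 1+σ_Rβ_R],[τ_Rα_R, τ_Rβ_R]]. Define ξ_L = −d_Lᵀb_L, ξ_R = d_Rᵀb_R, ξ_C = d_Lᵀb_R (and assume d_Lᵀb_R = −d_Rᵀb_L), δ_L = 1 + σ_Lβ_L − τ_Lα_L, δ_R = 1 + σ_Rβ_R − τ_Rα_R, and the 4×4 matrix Σ = [[σ_L+τ_Lξ_L, −τ_Rξ_C, 0, 0], [−τ_Lξ_C, σ_R+τ_Rξ_R, 0, 0], [δ_L, 0, α_L+β_L/ℓ, −β_L/ℓ], [0, δ_R, −β_R/ℓ, α_R+β_R/ℓ]]. If Σ is invertible, then Ã is invertible with Ã⁻¹ = G₂ + [−τ_Lb_L, −τ_Rb_R, 𝟙−x/ℓ, x/ℓ]·Σ⁻¹·[b_Lᵀ; b_Rᵀ; β_L(𝟙−x/ℓ)ᵀ;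 β_Rxᵀ/ℓ]. -/
import Mathlib

open Matrix

private lemma vmv_mul {l m n : Type*} [Fintype m] (u : l → ℝ) (v : m → ℝ) (M : Matrix m n ℝ) :
    Matrix.vecMulVec u v * M = Matrix.vecMulVec u (v ᵥ* M) := by
  ext i j
  simp [Matrix.mul_apply, Matrix.vecMulVec_apply, Matrix.vecMul, dotProduct,
    Finset.mul_sum, mul_assoc]

private lemma vmv_mulVec {l m : Type*} [Fintype m] (u : l → ℝ) (v w : m → ℝ) :
    Matrix.vecMulVec u v *ᵥ w = (v ⬝ᵥ w) • u := by
  ext i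
  simp [Matrix.mulVec, Matrix.vecMulVec_apply, dotProduct, Finset.sum_mul,
    Finset.mul_sum, mul_assoc, mul_comm, mul_left_comm]

set_option maxHeartbeats 2000000 in
/-- Inverse of the second-derivative SBP-SAT discretization matrix `Ã`
(Theorem 2 of the paper): if the `4 × 4` matrix `Σ` is invertible, then `Ã` is
invertible with the stated explicit inverse. -/
theorem stmt9 (n : ℕ) (hn : 2 ≤ n) (h : ℝ) (hh : 0 < h)
    (A : Matrix (Fin (n+1)) (Fin (n+1)) ℝ) (hAsym : Aᵀ = A)
    (x : Fin (n+1) → ℝ) (hx : x = fun (i : Fin (n+1)) => h * ((i : ℕ) : ℝ))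
    (ℓ : ℝ) (hℓ : ℓ = n * h)
    (eL eR : Fin (n+1) → ℝ)
    (heL : eL = fun i => if i = 0 then 1 else 0)
    (heR : eR = fun i => if i = Fin.last n then 1 else 0)
    (hA1 : A *ᵥ (fun i => ℓ * 1 - x i) = eL - eR)
    (hAx : A *ᵥ x = eR - eL)
    (emb : Fin (n-1) → Fin (n+1))
    (hemb : emb = fun i => ⟨(i : ℕ) + 1, by have := i.isLt; omega⟩)
    (Ab : Matrix (Fin (n-1)) (Fin (n-1)) ℝ)
    (hAb : Ab = Matrix.of fun i j => A (emb i) (emb j))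
    (hAbinv : IsUnit Ab.det)
    (G2 : Matrix (Fin (n+1)) (Fin (n+1)) ℝ)
    (hG2int : ∀ i j : Fin (n-1), G2 (emb i) (emb j) = Ab⁻¹ i j)
    (hG2bd : ∀ j : Fin (n+1), G2 0 j = 0 ∧ G2 (Fin.last n) j = 0
      ∧ G2 j 0 = 0 ∧ G2 j (Fin.last n) = 0)
    (dL dR : Fin (n+1) → ℝ)
    (hdL1 : dL ⬝ᵥ (fun _ => 1) = 0) (hdLx : dL ⬝ᵥ x = 1)
    (hdR1 : dR ⬝ᵥ (fun _ => 1) = 0) (hdRx : dR ⬝ᵥ x = 1)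
    (bL bR : Fin (n+1) → ℝ)
    (hbL : bL = fun i => 1 - x i / ℓ - (G2 *ᵥ dL) i)
    (hbR : bR = fun i => x i / ℓ + (G2 *ᵥ dR) i)
    (ξL ξR ξC : ℝ)
    (hξL : ξL = -(dL ⬝ᵥ bL)) (hξR : ξR = dR ⬝ᵥ bR) (hξC : ξC = dL ⬝ᵥ bR)
    (hξCskew : dL ⬝ᵥ bR = -(dR ⬝ᵥ bL))
    (σL σR τL τR αL αR βL βR : ℝ)
    (δL δR : ℝ) (hδL : δL = 1 + σL * βL - τL * αL)
    (hδR : δR = 1 + σR * βR - τR * αR)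
    (CL CR : Matrix (Fin (n+1)) (Fin 2) ℝ)
    (hCL : CL = Matrix.of fun i k => if k = 0 then eL i else -dL i)
    (hCR : CR = Matrix.of fun i k => if k = 0 then eR i else dR i)
    (ML MR : Matrix (Fin 2) (Fin 2) ℝ)
    (hML : ML = !![σL * αL, 1 + σL * βL; τL * αL, τL * βL])
    (hMR : MR = !![σR * αR, 1 + σR * βR; τR * αR, τR * βR])
    (At : Matrix (Fin (n+1)) (Fin (n+1)) ℝ)
    (hAt : At = A - CL * ML * CLᵀ - CR * MR * CRᵀ)
    (Sm : Matrix (Fin 4) (Fin 4) ℝ)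
    (hS : Sm = !![σL + τL * ξL, -(τR * ξC), 0, 0;
                  -(τL * ξC), σR + τR * ξR, 0, 0;
                  δL, 0, αL + βL / ℓ, -(βL / ℓ);
                  0, δR, -(βR / ℓ), αR + βR / ℓ])
    (hSinv : IsUnit Sm.det)
    (U : Matrix (Fin (n+1)) (Fin 4) ℝ)
    (hU : U = Matrix.of fun i k =>
      ![-(τL * bL i), -(τR * bR i), 1 - x i / ℓ, x i / ℓ] k)
    (V : Matrix (Fin 4) (Fin (n+1)) ℝ)
    (hV : V = Matrix.of fun k j =>
      ![bL j, bR j, βL * (1 - x j / ℓ), βR * (x j / ℓ)] k) :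
    IsUnit At.det ∧ At⁻¹ = G2 + U * Sm⁻¹ * V := by
  obtain ⟨m, rfl⟩ : ∃ m, n = m + 2 := ⟨n - 2, by omega⟩
  have hℓ0 : ℓ ≠ 0 := by
    have : (0:ℝ) < ((m+2:ℕ):ℝ) := by positivity
    rw [hℓ]; positivity
  set p : Fin (m+2+1) → ℝ := fun i => 1 - x i / ℓ with hp
  set q : Fin (m+2+1) → ℝ := fun i => x i / ℓ with hq
  have hx0 : x 0 = 0 := by rw [hx]; simp
  have hxl : x (Fin.last (m+2)) = ℓ := by rw [hx, hℓ]; simp [Fin.last]; ring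
  have hp0 : p 0 = 1 := by simp [hp, hx0]
  have hpl : p (Fin.last (m+2)) = 0 := by simp [hp, hxl, div_self hℓ0]
  have hq0 : q 0 = 0 := by simp [hq, hx0]
  have hql : q (Fin.last (m+2)) = 1 := by simp [hq, hxl, div_self hℓ0]
  have hembv : ∀ k : Fin (m+2-1), ((emb k : Fin (m+2+1)) : ℕ) = (k:ℕ)+1 := by
    intro k; rw [hemb]
  have hembne0 : ∀ k, emb k ≠ 0 := by
    intro k hk
    have := hembv k
    rw [hk] at this
    simp at this
  have hembnel : ∀ k, emb k ≠ Fin.last (m+2) := by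
    intro k hk
    have h1 := hembv k
    have h2 := k.isLt
    rw [hk] at h1
    simp [Fin.last] at h1
    omega
  have hembinj : ∀ k k', emb k = emb k' → k = k' := by
    intro k k' hkk
    have h1 := hembv k
    have h2 := hembv k'
    rw [hkk] at h1
    rw [h2] at h1
    exact Fin.ext (by omega)
  have htri : ∀ i : Fin (m+2+1), i = 0 ∨ i = Fin.last (m+2) ∨ ∃ k, emb k = i := by
    intro i
    rcases Nat.eq_zero_or_pos (i : ℕ) with h0 | h0
    · exact Or.inl (Fin.ext (by simpa using h0))
    · rcases eq_or_lt_of_le (Nat.le_of_lt_succ i.isLt) with hl | hl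
      · exact Or.inr (Or.inl (Fin.ext (by simpa [Fin.last] using hl)))
      · refine Or.inr (Or.inr ⟨⟨(i:ℕ) - 1, by omega⟩, ?_⟩)
        rw [hemb]
        exact Fin.ext (by simp; omega)
  have hsum : ∀ f : Fin (m+2+1) → ℝ,
      ∑ k, f k = f 0 + (∑ k : Fin (m+2-1), f (emb k)) + f (Fin.last (m+2)) := by
    intro f
    rw [Fin.sum_univ_succ]
    rw [show (∑ i : Fin (m+2), f i.succ)
        = (∑ k : Fin (m+1), f (Fin.castSucc k).succ) + f (Fin.last (m+1)).succ
      from Fin.sum_univ_castSucc _]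
    have h1 : ∀ k : Fin (m+1), (Fin.castSucc k).succ = emb k := by
      intro k; rw [hemb]; ext; simp
    have h2 : (Fin.last (m+1)).succ = Fin.last (m+2) := by ext; simp
    simp only [h1, h2]
    have h3 : (∑ k : Fin (m+1), f (emb k)) = ∑ k : Fin (m+2-1), f (emb k) := rfl
    rw [h3]; ring
  have hA' : ∀ i j, A i j = A j i := by
    intro i j
    conv_lhs => rw [← hAsym]
    rw [Matrix.transpose_apply]
  have hAbsym : Abᵀ = Ab := by
    ext i j
    rw [hAb, Matrix.transpose_apply]
    exact hA' (emb j) (emb i)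
  have hAbisym : Ab⁻¹ᵀ = Ab⁻¹ := by rw [Matrix.transpose_nonsing_inv, hAbsym]
  have hApm : A *ᵥ p = ℓ⁻¹ • (eL - eR) := by
    have h1 : (fun i => ℓ * 1 - x i) = ℓ • p := by
      funext i; simp [hp]; field_simp
    rw [h1, Matrix.mulVec_smul] at hA1
    rw [← hA1, smul_smul, inv_mul_cancel₀ hℓ0, one_smul]
  have hAqm : A *ᵥ q = ℓ⁻¹ • (eR - eL) := by
    have h1 : x = ℓ • q := by
      funext i; simp [hq]; field_simp
    rw [h1, Matrix.mulVec_smul] at hAx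
    rw [← hAx, smul_smul, inv_mul_cancel₀ hℓ0, one_smul]
  have hpdef : p = (fun _ => (1:ℝ)) - ℓ⁻¹ • x := by
    funext i; simp [hp, div_eq_mul_inv, mul_comm]
  have hqdef : q = ℓ⁻¹ • x := by
    funext i; simp [hq, div_eq_mul_inv, mul_comm]
  have hdLp : dL ⬝ᵥ p = -ℓ⁻¹ := by
    rw [hpdef, dotProduct_sub, dotProduct_smul, hdL1, hdLx]; simp
  have hdLq : dL ⬝ᵥ q = ℓ⁻¹ := by
    rw [hqdef, dotProduct_smul, hdLx]; simp
  have hdRp : dR ⬝ᵥ p = -ℓ⁻¹ := by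
    rw [hpdef, dotProduct_sub, dotProduct_smul, hdR1, hdRx]; simp
  have hdRq : dR ⬝ᵥ q = ℓ⁻¹ := by
    rw [hqdef, dotProduct_smul, hdRx]; simp
  have hAbe : ∀ k k', Ab k k' = A (emb k) (emb k') := by
    intro k k'; rw [hAb]; rfl
  have hG2r0 : ∀ j, G2 0 j = 0 := fun j => (hG2bd j).1
  have hG2rl : ∀ j, G2 (Fin.last (m+2)) j = 0 := fun j => (hG2bd j).2.1
  have hG2c0 : ∀ j, G2 j 0 = 0 := fun j => (hG2bd j).2.2.1
  have hG2cl : ∀ j, G2 j (Fin.last (m+2)) = 0 := fun j => (hG2bd j).2.2.2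
  have hApint : ∀ k, (A *ᵥ p) (emb k) = 0 := by
    intro k
    rw [hApm]
    simp [heL, heR, hembne0 k, hembnel k]
  have hAqint : ∀ k, (A *ᵥ q) (emb k) = 0 := by
    intro k
    rw [hAqm]
    simp [heL, heR, hembne0 k, hembnel k]
  have hmve : ∀ (M : Matrix (Fin (m+2+1)) (Fin (m+2+1)) ℝ) (v : Fin (m+2+1) → ℝ) i,
      (M *ᵥ v) i = ∑ j, M i j * v j := fun M v i => rfl
  have hAbp : Ab *ᵥ (fun k => p (emb k)) = fun k => -(A (emb k) 0) := by
    funext k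
    have h1 := hApint k
    rw [hmve, hsum (fun j => A (emb k) j * p j), hp0, hpl] at h1
    show ∑ k', Ab k k' * p (emb k') = -(A (emb k) 0)
    rw [Finset.sum_congr rfl (fun k' _ => by rw [hAbe k k'])]
    linarith [h1]
  have hAbq : Ab *ᵥ (fun k => q (emb k)) = fun k => -(A (emb k) (Fin.last (m+2))) := by
    funext k
    have h1 := hAqint k
    rw [hmve, hsum (fun j => A (emb k) j * q j), hq0, hql] at h1
    show ∑ k', Ab k k' * q (emb k') = -(A (emb k) (Fin.last (m+2)))
    rw [Finset.sum_congr rfl (fun k' _ => by rw [hAbe k k'])]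
    linarith [h1]
  have hvmgen : ∀ (c : Fin (m+2-1) → ℝ) (w : Fin (m+2-1) → ℝ),
      Ab *ᵥ w = (fun k => -(c k)) → ∀ j', ∑ k, c k * Ab⁻¹ k j' = -(w j') := by
    intro c w hcw j'
    have hvm : c ᵥ* Ab⁻¹ = fun k' => -(w k') := by
      have hc : c = -(Ab *ᵥ w) := by rw [hcw]; funext k; simp
      rw [hc, Matrix.neg_vecMul]
      have h2 : (Ab *ᵥ w) ᵥ* Ab⁻¹ = w := by
        rw [← hAbisym, Matrix.vecMul_transpose, Matrix.mulVec_mulVec,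
          Matrix.nonsing_inv_mul _ hAbinv, Matrix.one_mulVec]
      rw [h2]
      rfl
    exact congrFun hvm j'
  have h0row : ∀ j', ∑ k, A 0 (emb k) * Ab⁻¹ k j' = -(p (emb j')) := by
    intro j'
    have := hvmgen (fun k => A (emb k) 0) (fun k => p (emb k)) hAbp j'
    rw [← this]
    exact Finset.sum_congr rfl fun k _ => by rw [hA' 0 (emb k)]
  have hlrow : ∀ j', ∑ k, A (Fin.last (m+2)) (emb k) * Ab⁻¹ k j' = -(q (emb j')) := by
    intro j'
    have := hvmgen (fun k => A (emb k) (Fin.last (m+2))) (fun k => q (emb k)) hAbq j'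
    rw [← this]
    exact Finset.sum_congr rfl fun k _ => by rw [hA' (Fin.last (m+2)) (emb k)]
  have hintrow : ∀ i' j', ∑ k, A (emb i') (emb k) * Ab⁻¹ k j'
      = if i' = j' then (1:ℝ) else 0 := by
    intro i' j'
    have h1 := congrFun (congrFun (Matrix.mul_nonsing_inv Ab hAbinv) i') j'
    rw [Matrix.mul_apply] at h1
    calc ∑ k, A (emb i') (emb k) * Ab⁻¹ k j' = ∑ k, Ab i' k * Ab⁻¹ k j' :=
          Finset.sum_congr rfl fun k _ => by rw [hAbe i' k]
      _ = if i' = j' then (1:ℝ) else 0 := by rw [h1, Matrix.one_apply]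
  have hAG2 : ∀ i j, (A * G2) i j = (if i = j then (1:ℝ) else 0) - eL i * p j - eR i * q j := by
    intro i j
    rw [Matrix.mul_apply]
    rcases htri j with rfl | rfl | ⟨j', rfl⟩
    · rw [Finset.sum_congr rfl (fun k _ => by rw [hG2c0 k, mul_zero]), Finset.sum_const_zero]
      rw [hp0, hq0, heL, heR]
      by_cases hi : i = (0 : Fin (m+2+1)) <;> simp [hi, hembne0]
    · rw [Finset.sum_congr rfl (fun k _ => by rw [hG2cl k, mul_zero]), Finset.sum_const_zero]
      rw [hpl, hql, heL, heR]
      by_cases hi : i = Fin.last (m+2) <;> simp [hi]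
    · rw [hsum (fun k => A i k * G2 k (emb j')), hG2r0, hG2rl, mul_zero, mul_zero,
        add_zero, zero_add]
      rw [Finset.sum_congr rfl (fun k _ => by rw [hG2int k j'])]
      rcases htri i with rfl | rfl | ⟨i', rfl⟩
      · rw [h0row j', heL, heR]
        have : ¬ ((0:Fin (m+2+1)) = emb j') := fun hh' => hembne0 j' hh'.symm
        simp [this, hembnel, Fin.ext_iff, Fin.last]
      · rw [hlrow j', heL, heR]
        have h1 : ¬ (Fin.last (m+2) = emb j') := fun hh' => hembnel j' hh'.symm
        have h2 : ¬ ((Fin.last (m+2) : Fin (m+2+1)) = 0) := by simp [Fin.ext_iff, Fin.last]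
        simp [h1, h2]
      · rw [hintrow i' j', heL, heR]
        have h1 : (emb i' = emb j') ↔ (i' = j') :=
          ⟨hembinj i' j', fun hh' => by rw [hh']⟩
        simp [h1, hembne0, hembnel]
  have hAG2m : A * G2 = 1 - vecMulVec eL p - vecMulVec eR q := by
    ext i j
    rw [hAG2 i j]
    simp [Matrix.sub_apply, Matrix.one_apply, Matrix.vecMulVec_apply]
  have hG2sym : ∀ i j, G2 i j = G2 j i := by
    intro i j
    rcases htri i with rfl | rfl | ⟨k, rfl⟩ <;> rcases htri j with rfl | rfl | ⟨k', rfl⟩ <;>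
      try simp [hG2r0, hG2rl, hG2c0, hG2cl]
    rw [hG2int k k', hG2int k' k]
    conv_lhs => rw [← hAbisym]
    rw [Matrix.transpose_apply]
  have hG2symm : G2ᵀ = G2 := by
    ext i j; rw [Matrix.transpose_apply]; exact hG2sym j i
  have hGdLm : G2 *ᵥ dL = p - bL := by
    funext i
    simp [Pi.sub_apply, hbL, hp]
  have hGdRm : G2 *ᵥ dR = bR - q := by
    funext i
    simp [Pi.sub_apply, hbR, hq]
  have hpdL : p ⬝ᵥ dL = -ℓ⁻¹ := by rw [dotProduct_comm]; exact hdLp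
  have hqdL : q ⬝ᵥ dL = ℓ⁻¹ := by rw [dotProduct_comm]; exact hdLq
  have hpdR : p ⬝ᵥ dR = -ℓ⁻¹ := by rw [dotProduct_comm]; exact hdRp
  have hqdR : q ⬝ᵥ dR = ℓ⁻¹ := by rw [dotProduct_comm]; exact hdRq
  have hbLf : bL = p - G2 *ᵥ dL := by
    funext i; rw [hbL]; simp [hp]
  have hbRf : bR = q + G2 *ᵥ dR := by
    funext i; rw [hbR]; simp [hq]
  have hAbLm : A *ᵥ bL = -dL := by
    rw [hbLf, Matrix.mulVec_sub, hApm, Matrix.mulVec_mulVec, hAG2m,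
      Matrix.sub_mulVec, Matrix.sub_mulVec, Matrix.one_mulVec, vmv_mulVec, vmv_mulVec,
      hpdL, hqdL]
    funext i
    simp
    ring
  have hAbRm : A *ᵥ bR = dR := by
    rw [hbRf, Matrix.mulVec_add, hAqm, Matrix.mulVec_mulVec, hAG2m,
      Matrix.sub_mulVec, Matrix.sub_mulVec, Matrix.one_mulVec, vmv_mulVec, vmv_mulVec,
      hpdR, hqdR]
    funext i
    simp
    ring
  have hGdL0 : (G2 *ᵥ dL) 0 = 0 := by
    rw [hmve]
    rw [Finset.sum_congr rfl (fun k _ => by rw [hG2r0 k, zero_mul]), Finset.sum_const_zero]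
  have hGdLl : (G2 *ᵥ dL) (Fin.last (m+2)) = 0 := by
    rw [hmve]
    rw [Finset.sum_congr rfl (fun k _ => by rw [hG2rl k, zero_mul]), Finset.sum_const_zero]
  have hGdR0 : (G2 *ᵥ dR) 0 = 0 := by
    rw [hmve]
    rw [Finset.sum_congr rfl (fun k _ => by rw [hG2r0 k, zero_mul]), Finset.sum_const_zero]
  have hGdRl : (G2 *ᵥ dR) (Fin.last (m+2)) = 0 := by
    rw [hmve]
    rw [Finset.sum_congr rfl (fun k _ => by rw [hG2rl k, zero_mul]), Finset.sum_const_zero]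
  have hbL0 : bL 0 = 1 := by rw [hbL]; simp [hx0, hGdL0]
  have hbLl : bL (Fin.last (m+2)) = 0 := by
    rw [hbL]; simp [hxl, div_self hℓ0, hGdLl]
  have hbR0 : bR 0 = 0 := by rw [hbR]; simp [hx0, hGdR0]
  have hbRl : bR (Fin.last (m+2)) = 1 := by
    rw [hbR]; simp [hxl, div_self hℓ0, hGdRl]
  have heLG2 : eL ᵥ* G2 = 0 := by
    rw [← hG2symm, Matrix.vecMul_transpose]
    funext j
    rw [hmve]
    simp [heL, mul_ite, hG2c0]
  have heRG2 : eR ᵥ* G2 = 0 := by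
    rw [← hG2symm, Matrix.vecMul_transpose]
    funext j
    rw [hmve]
    simp [heR, mul_ite, hG2cl]
  have hdLG2 : dL ᵥ* G2 = p - bL := by
    rw [← hG2symm, Matrix.vecMul_transpose, hGdLm]
  have hdRG2 : dR ᵥ* G2 = bR - q := by
    rw [← hG2symm, Matrix.vecMul_transpose, hGdRm]
  have hLo : CL * ML * CLᵀ = (σL*αL) • vecMulVec eL eL + (-(1+σL*βL)) • vecMulVec eL dL
      + (-(τL*αL)) • vecMulVec dL eL + (τL*βL) • vecMulVec dL dL := by
    ext i j
    simp [Matrix.mul_apply, Fin.sum_univ_two, hCL, hML, Matrix.vecMulVec_apply]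
    ring
  have hRo : CR * MR * CRᵀ = (σR*αR) • vecMulVec eR eR + ((1+σR*βR)) • vecMulVec eR dR
      + ((τR*αR)) • vecMulVec dR eR + (τR*βR) • vecMulVec dR dR := by
    ext i j
    simp [Matrix.mul_apply, Fin.sum_univ_two, hCR, hMR, Matrix.vecMulVec_apply]
    ring
  have hLoG2 : (CL * ML * CLᵀ) * G2 = (-(1+σL*βL)) • vecMulVec eL (p - bL)
      + (τL*βL) • vecMulVec dL (p - bL) := by
    rw [hLo, Matrix.add_mul, Matrix.add_mul, Matrix.add_mul, Matrix.smul_mul,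
      Matrix.smul_mul, Matrix.smul_mul, Matrix.smul_mul, vmv_mul, vmv_mul, vmv_mul, vmv_mul,
      heLG2, hdLG2]
    ext i j
    simp [Matrix.vecMulVec_apply]
  have hRoG2 : (CR * MR * CRᵀ) * G2 = ((1+σR*βR)) • vecMulVec eR (bR - q)
      + (τR*βR) • vecMulVec dR (bR - q) := by
    rw [hRo, Matrix.add_mul, Matrix.add_mul, Matrix.add_mul, Matrix.smul_mul,
      Matrix.smul_mul, Matrix.smul_mul, Matrix.smul_mul, vmv_mul, vmv_mul, vmv_mul, vmv_mul,
      heRG2, hdRG2]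
    ext i j
    simp [Matrix.vecMulVec_apply]
  set N : Matrix (Fin (m+2+1)) (Fin 4) ℝ := Matrix.of fun i k =>
    ![(1+σL*βL)*eL i - τL*βL*dL i, (1+σR*βR)*eR i + τR*βR*dR i,
      τL*dL i - σL*eL i, -(σR*eR i + τR*dR i)] k with hN
  have hNV : ∀ i j, (N * V) i j
      = ((1+σL*βL)*eL i - τL*βL*dL i) * bL j + ((1+σR*βR)*eR i + τR*βR*dR i) * bR j
        + (τL*dL i - σL*eL i) * (βL * p j) + (-(σR*eR i + τR*dR i)) * (βR * q j) := by
    intro i j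
    rw [Matrix.mul_apply, Fin.sum_univ_four]
    simp [hN, hV, hp, hq]
  have hI : At * G2 = 1 - N * V := by
    rw [hAt, Matrix.sub_mul, Matrix.sub_mul, hAG2m, hLoG2, hRoG2]
    ext i j
    simp only [Matrix.sub_apply, Matrix.add_apply, Matrix.smul_apply, Matrix.vecMulVec_apply,
      Matrix.one_apply, Pi.sub_apply, smul_eq_mul]
    rw [hNV i j]
    ring
  have hdLbL : dL ⬝ᵥ bL = -ξL := by rw [hξL]; ring
  have hdLbR : dL ⬝ᵥ bR = ξC := hξC.symm
  have hdRbL : dR ⬝ᵥ bL = -ξC := by rw [hξC]; linarith [hξCskew]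
  have hdRbR : dR ⬝ᵥ bR = ξR := hξR.symm
  have heLU : eL ᵥ* U = ![-τL, 0, 1, 0] := by
    funext κ
    have h1 : (eL ᵥ* U) κ = U 0 κ := by
      show ∑ j, eL j * U j κ = U 0 κ
      simp [heL, ite_mul]
    rw [h1, hU]
    fin_cases κ <;> simp [hbL0, hbR0, hx0]
  have heRU : eR ᵥ* U = ![0, -τR, 0, 1] := by
    funext κ
    have h1 : (eR ᵥ* U) κ = U (Fin.last (m+2)) κ := by
      show ∑ j, eR j * U j κ = U (Fin.last (m+2)) κ
      simp [heR, ite_mul]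
    rw [h1, hU]
    fin_cases κ <;> simp [hbLl, hbRl, hxl, div_self hℓ0]
  have hdLU : dL ᵥ* U = ![τL*ξL, -(τR*ξC), -ℓ⁻¹, ℓ⁻¹] := by
    have h0 : (dL ᵥ* U) 0 = τL*ξL := by
      show ∑ j, dL j * U j 0 = τL*ξL
      calc ∑ j, dL j * U j 0 = -τL * ∑ j, dL j * bL j := by
            rw [Finset.mul_sum]; exact Finset.sum_congr rfl fun j _ => by simp [hU]; ring
        _ = τL*ξL := by rw [show ∑ j, dL j * bL j = dL ⬝ᵥ bL from rfl, hdLbL]; ring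
    have h1 : (dL ᵥ* U) 1 = -(τR*ξC) := by
      show ∑ j, dL j * U j 1 = -(τR*ξC)
      calc ∑ j, dL j * U j 1 = -τR * ∑ j, dL j * bR j := by
            rw [Finset.mul_sum]; exact Finset.sum_congr rfl fun j _ => by simp [hU]; ring
        _ = -(τR*ξC) := by rw [show ∑ j, dL j * bR j = dL ⬝ᵥ bR from rfl, hdLbR]; ring
    have h2 : (dL ᵥ* U) 2 = -ℓ⁻¹ := by
      show ∑ j, dL j * U j 2 = -ℓ⁻¹
      calc ∑ j, dL j * U j 2 = ∑ j, dL j * p j :=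
            Finset.sum_congr rfl fun j _ => by simp [hU, hp]
        _ = -ℓ⁻¹ := by rw [show ∑ j, dL j * p j = dL ⬝ᵥ p from rfl, hdLp]
    have h3 : (dL ᵥ* U) 3 = ℓ⁻¹ := by
      show ∑ j, dL j * U j 3 = ℓ⁻¹
      calc ∑ j, dL j * U j 3 = ∑ j, dL j * q j :=
            Finset.sum_congr rfl fun j _ => by simp [hU, hq]
        _ = ℓ⁻¹ := by rw [show ∑ j, dL j * q j = dL ⬝ᵥ q from rfl, hdLq]
    funext κ
    fin_cases κ
    · exact h0
    · exact h1
    · exact h2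
    · exact h3
  have hdRU : dR ᵥ* U = ![τL*ξC, -(τR*ξR), -ℓ⁻¹, ℓ⁻¹] := by
    have h0 : (dR ᵥ* U) 0 = τL*ξC := by
      show ∑ j, dR j * U j 0 = τL*ξC
      calc ∑ j, dR j * U j 0 = -τL * ∑ j, dR j * bL j := by
            rw [Finset.mul_sum]; exact Finset.sum_congr rfl fun j _ => by simp [hU]; ring
        _ = τL*ξC := by rw [show ∑ j, dR j * bL j = dR ⬝ᵥ bL from rfl, hdRbL]; ring
    have h1 : (dR ᵥ* U) 1 = -(τR*ξR) := by
      show ∑ j, dR j * U j 1 = -(τR*ξR)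
      calc ∑ j, dR j * U j 1 = -τR * ∑ j, dR j * bR j := by
            rw [Finset.mul_sum]; exact Finset.sum_congr rfl fun j _ => by simp [hU]; ring
        _ = -(τR*ξR) := by rw [show ∑ j, dR j * bR j = dR ⬝ᵥ bR from rfl, hdRbR]; ring
    have h2 : (dR ᵥ* U) 2 = -ℓ⁻¹ := by
      show ∑ j, dR j * U j 2 = -ℓ⁻¹
      calc ∑ j, dR j * U j 2 = ∑ j, dR j * p j :=
            Finset.sum_congr rfl fun j _ => by simp [hU, hp]
        _ = -ℓ⁻¹ := by rw [show ∑ j, dR j * p j = dR ⬝ᵥ p from rfl, hdRp]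
    have h3 : (dR ᵥ* U) 3 = ℓ⁻¹ := by
      show ∑ j, dR j * U j 3 = ℓ⁻¹
      calc ∑ j, dR j * U j 3 = ∑ j, dR j * q j :=
            Finset.sum_congr rfl fun j _ => by simp [hU, hq]
        _ = ℓ⁻¹ := by rw [show ∑ j, dR j * q j = dR ⬝ᵥ q from rfl, hdRq]
    funext κ
    fin_cases κ
    · exact h0
    · exact h1
    · exact h2
    · exact h3
  have hAU : ∀ i (κ : Fin 4), (A * U) i κ
      = ![τL * dL i, -(τR * dR i), (eL i - eR i) * ℓ⁻¹, (eR i - eL i) * ℓ⁻¹] κ := by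
    intro i κ
    fin_cases κ
    · show ∑ j, A i j * U j 0 = τL * dL i
      calc ∑ j, A i j * U j 0 = -τL * ∑ j, A i j * bL j := by
            rw [Finset.mul_sum]; exact Finset.sum_congr rfl fun j _ => by simp [hU]; ring
        _ = τL * dL i := by rw [← hmve, hAbLm]; simp
    · show ∑ j, A i j * U j 1 = -(τR * dR i)
      calc ∑ j, A i j * U j 1 = -τR * ∑ j, A i j * bR j := by
            rw [Finset.mul_sum]; exact Finset.sum_congr rfl fun j _ => by simp [hU]; ring
        _ = -(τR * dR i) := by rw [← hmve, hAbRm]; ring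
    · show ∑ j, A i j * U j 2 = (eL i - eR i) * ℓ⁻¹
      calc ∑ j, A i j * U j 2 = ∑ j, A i j * p j :=
            Finset.sum_congr rfl fun j _ => by simp [hU, hp]
        _ = (eL i - eR i) * ℓ⁻¹ := by rw [← hmve, hApm]; simp; ring
    · show ∑ j, A i j * U j 3 = (eR i - eL i) * ℓ⁻¹
      calc ∑ j, A i j * U j 3 = ∑ j, A i j * q j :=
            Finset.sum_congr rfl fun j _ => by simp [hU, hq]
        _ = (eR i - eL i) * ℓ⁻¹ := by rw [← hmve, hAqm]; simp; ring
  have hLoU : ∀ i (κ : Fin 4), ((CL * ML * CLᵀ) * U) i κ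
      = (σL*αL) * eL i * (eL ᵥ* U) κ + (-(1+σL*βL)) * eL i * (dL ᵥ* U) κ
        + (-(τL*αL)) * dL i * (eL ᵥ* U) κ + (τL*βL) * dL i * (dL ᵥ* U) κ := by
    intro i κ
    rw [hLo, Matrix.add_mul, Matrix.add_mul, Matrix.add_mul, Matrix.smul_mul, Matrix.smul_mul,
      Matrix.smul_mul, Matrix.smul_mul, vmv_mul, vmv_mul, vmv_mul, vmv_mul]
    simp [Matrix.add_apply, Matrix.smul_apply, Matrix.vecMulVec_apply]
    ring
  have hRoU : ∀ i (κ : Fin 4), ((CR * MR * CRᵀ) * U) i κ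
      = (σR*αR) * eR i * (eR ᵥ* U) κ + ((1+σR*βR)) * eR i * (dR ᵥ* U) κ
        + ((τR*αR)) * dR i * (eR ᵥ* U) κ + (τR*βR) * dR i * (dR ᵥ* U) κ := by
    intro i κ
    rw [hRo, Matrix.add_mul, Matrix.add_mul, Matrix.add_mul, Matrix.smul_mul, Matrix.smul_mul,
      Matrix.smul_mul, Matrix.smul_mul, vmv_mul, vmv_mul, vmv_mul, vmv_mul]
    simp [Matrix.add_apply, Matrix.smul_apply, Matrix.vecMulVec_apply]
    ring
  have hII : At * U = N * Sm := by
    ext i κ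
    rw [show (At * U) i κ = (A * U) i κ - ((CL*ML*CLᵀ)*U) i κ - ((CR*MR*CRᵀ)*U) i κ from by
      rw [hAt, Matrix.sub_mul, Matrix.sub_mul]; simp [Matrix.sub_apply]]
    rw [hAU i κ, hLoU i κ, hRoU i κ, heLU, hdLU, heRU, hdRU]
    rw [Matrix.mul_apply, Fin.sum_univ_four]
    fin_cases κ
    · simp [hN, hS, hδL, hδR]
      ring
    · simp [hN, hS, hδL, hδR]
      ring
    · simp [hN, hS, hδL, hδR]
      field_simp
      ring
    · simp [hN, hS, hδL, hδR]
      field_simp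
      ring
  have key : At * (G2 + U * Sm⁻¹ * V) = 1 := by
    rw [Matrix.mul_add, hI]
    have h2 : At * (U * Sm⁻¹ * V) = N * V := by
      rw [← Matrix.mul_assoc, ← Matrix.mul_assoc, hII]
      have h3 : N * Sm * Sm⁻¹ = N := by
        rw [Matrix.mul_assoc, Matrix.mul_nonsing_inv _ hSinv, Matrix.mul_one]
      rw [h3]
    rw [h2]
    abel
  exact ⟨Matrix.isUnit_det_of_right_inverse key, Matrix.inv_eq_right_inv key⟩
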